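/- If r is a rotor type with exactly two states (both occurring), then the hitting sequence UD(r) of the UD variation of the compressor on r is balanced: the two targets 4 and 5 occur equally often in each period of UD(r). -/

import Mathlib

open scoped Classical

/-! ### Periodic sequences and rotor types

A rotor type is modelled as a function `f : ℕ → ℕ` (0-based reindexing of the paper's
sequence `r(1), r(2), …`, so the paper's `r(k)` is `f (k-1)`), together with its minimal
period `n`.  The states of the rotor are the values occurring in one period. -/

def IsPeriodicWith {α : Type*} (f : ℕ → α) (n : ℕ) : Prop := ∀ k, f (k + n) = f k

def IsMinimalPeriod {α : Type*} (f : ℕ → α) (n : ℕ) : Prop :=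
  0 < n ∧ IsPeriodicWith f n ∧ ∀ m, 0 < m → IsPeriodicWith f m → n ≤ m

noncomputable def minPeriod {α : Type*} (f : ℕ → α) : ℕ :=
  sInf {n | 0 < n ∧ IsPeriodicWith f n}

/-- `f` (with period `n`) reads the same forwards and backwards:
`r(k) = r(n+1-k)` for `1 ≤ k ≤ n`, written 0-based. -/
def Palindromic (f : ℕ → ℕ) (n : ℕ) : Prop := ∀ k < n, f k = f (n - 1 - k)

/-- `f` (with period `n`) is block-repetitive with block length `m`. -/
def BlockRepetitive (f : ℕ → ℕ) (n m : ℕ) : Prop :=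
  2 ≤ m ∧ m ∣ n ∧ ∀ k : ℕ, ∀ j < m, f (k * m + j) = f (k * m)

def Boppy (f : ℕ → ℕ) (n : ℕ) : Prop := Palindromic f n ∨ ∃ m, BlockRepetitive f n m

/-- The set of states of a rotor type of period `n`. -/
def states (f : ℕ → ℕ) (n : ℕ) : Finset ℕ := (Finset.range n).image f

/-- Number of occurrences of the state `v` among the first `n` terms of `f`. -/
noncomputable def countIn (f : ℕ → ℕ) (n v : ℕ) : ℕ :=
  ((Finset.range n).filter (fun k => f k = v)).card

/-- Merging reduction `s → s'`: replace every occurrence of `s` by `s'`. -/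
def merge (f : ℕ → ℕ) (s s' : ℕ) : ℕ → ℕ := fun k => if f k = s then s' else f k

/-- Destructive reduction `x(s)`: delete every occurrence of `s` and re-index. -/
noncomputable def destroy (f : ℕ → ℕ) (s : ℕ) : ℕ → ℕ :=
  fun k => f (Nat.nth (fun i => f i ≠ s) k)

/-- A two-state rotor type with states `1` and `2`, both occurring. -/
def TwoState (f : ℕ → ℕ) : Prop :=
  (∀ k, f k = 1 ∨ f k = 2) ∧ (∃ k, f k = 1) ∧ (∃ k, f k = 2)

/-! ### The compressor

The particle's trajectory alternates: at step `t` (0-based) the source `v1` fires its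
`(t+1)`-st term `f t`; if it is `1`, the particle moves to `v2`, whose firing count so far
is the number of `1`'s among `f 0, …, f (t-1)`; if it is `2`, it moves to `v3` similarly.
From `v2`/`v3` the particle either returns to the source (no target hit) or hits target
`4`/`5` and restarts at the source.  `X Y : Bool` encode the variation, `true` = `U`:
at `v2` state `1` routes up to `v1` iff `X = true`; at `v3` state `1` routes up iff
`Y = true`. -/

noncomputable def hitAt (X Y : Bool) (r : ℕ → ℕ) (t : ℕ) : Option ℕ :=
  if r t = 1 then
    (if decide (r (countIn r t 1) = 1) ≠ X then some 4 else none)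
  else
    (if decide (r (countIn r t 2) = 1) ≠ Y then some 5 else none)

/-- The hitting sequence of the compressor variation `XY` on rotor type `r`:
the subsequence of recorded targets (`4` or `5`), in order. -/
noncomputable def compSeq (X Y : Bool) (r : ℕ → ℕ) : ℕ → ℕ :=
  fun k => (hitAt X Y r (Nat.nth (fun t => (hitAt X Y r t).isSome = true) k)).getD 4

noncomputable def UUseq (r : ℕ → ℕ) : ℕ → ℕ := compSeq true true r
noncomputable def UDseq (r : ℕ → ℕ) : ℕ → ℕ := compSeq true false r
noncomputable def DUseq (r : ℕ → ℕ) : ℕ → ℕ := compSeq false true r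
noncomputable def DDseq (r : ℕ → ℕ) : ℕ → ℕ := compSeq false false r

/-- The compressor output with targets `4, 5` relabelled as states `1, 2`. -/
noncomputable def compOp (X Y : Bool) (r : ℕ → ℕ) : ℕ → ℕ := fun k => compSeq X Y r k - 3

noncomputable def UUop (r : ℕ → ℕ) : ℕ → ℕ := compOp true true r
noncomputable def UDop (r : ℕ → ℕ) : ℕ → ℕ := compOp true false r
noncomputable def DUop (r : ℕ → ℕ) : ℕ → ℕ := compOp false true r
noncomputable def DDop (r : ℕ → ℕ) : ℕ → ℕ := compOp false false r

/-- A finite composition of compressor operations (each given by its pair of letters),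
with the targets relabelled back to `1, 2` after each application. -/
noncomputable def applyOps (ops : List (Bool × Bool)) (r : ℕ → ℕ) : ℕ → ℕ :=
  ops.foldl (fun s o => compOp o.1 o.2 s) r

/-- The hitting sequence of the depth-2 binary tree network `BT` on `r`
(targets `1,2,3,4`): every firing of the source produces a hit. -/
noncomputable def BTseq (r : ℕ → ℕ) : ℕ → ℕ :=
  fun t => if r t = 1 then (if r (countIn r t 1) = 1 then 1 else 2)
           else (if r (countIn r t 2) = 1 then 3 else 4)

/-- Two sequences are equivalent if one is obtained from the other by a relabelling
that is injective on the values of the first (a bijective relabelling of states). -/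
def SeqEquiv {α β : Type*} (f : ℕ → α) (g : ℕ → β) : Prop :=
  ∃ ρ : α → β, (∀ k, ρ (f k) = g k) ∧ ∀ k l, ρ (f k) = ρ (f l) → f k = f l

/-- Every aligned block of length `m` of `f` contains states `1` and `2` equally often
(`m = 2n` gives `2n`-balance). -/
def BalancedBlocks (f : ℕ → ℕ) (m : ℕ) : Prop :=
  ∀ k : ℕ, countIn (fun j => f (k * m + j)) m 1 = countIn (fun j => f (k * m + j)) m 2

/-- `f ≡_m g` : some relabelling of `f` (injective on states) has the same multiset of
entries as `g` on every aligned block of length `m`. -/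
def BlockEquiv (f g : ℕ → ℕ) (m : ℕ) : Prop :=
  ∃ ρ : ℕ → ℕ, (∀ k l, ρ (f k) = ρ (f l) ↔ f k = f l) ∧
    ∀ k : ℕ, (Multiset.range m).map (fun j => ρ (f (k * m + j))) =
             (Multiset.range m).map (fun j => g (k * m + j))

/-- `L` is a balanced run decomposition of one period (of length `p`) of `f`:
a list of positive run lengths summing to `p` such that each corresponding
consecutive run contains `1` and `2` equally often. -/
noncomputable def IsBRD (f : ℕ → ℕ) (p : ℕ) (L : List ℕ) : Prop :=
  L.sum = p ∧ (∀ a ∈ L, 0 < a) ∧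
  ∀ i : Fin L.length,
    countIn (fun j => f ((L.take i.1).sum + j)) (L.get i) 1 =
    countIn (fun j => f ((L.take i.1).sum + j)) (L.get i) 2

/-- `L` is a uniform run decomposition of one period (of length `p`) of `f`:
a list of positive run lengths summing to `p` such that each corresponding
consecutive run is constant. -/
def IsURD (f : ℕ → ℕ) (p : ℕ) (L : List ℕ) : Prop :=
  L.sum = p ∧ (∀ a ∈ L, 0 < a) ∧
  ∀ i : Fin L.length, ∀ j < L.get i, f ((L.take i.1).sum + j) = f ((L.take i.1).sum)

/-- The maximal number of runs in a BRD of `f` (period `p`). -/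
noncomputable def maxBRD (f : ℕ → ℕ) (p : ℕ) : ℕ :=
  sSup {m | ∃ L : List ℕ, IsBRD f p L ∧ L.length = m}

/-- The balance coefficient `b(f)` (with respect to period length `p`). -/
noncomputable def balCoeff (f : ℕ → ℕ) (p : ℕ) : ℚ := (maxBRD f p : ℚ) / (p : ℚ)

/-- The type of a run decomposition, as an infinite periodic sequence of run data. -/
def typeSeq (L : List ℕ) : ℕ → ℕ := fun i => L.getD (i % L.length) 0

/-- A BURD rotor: it has a BRD and a URD of the same type, i.e. the `i`-th balanced run
has length `2·b_i` where `b_i` is the length of the `i`-th uniform run. -/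
noncomputable def IsBURD (f : ℕ → ℕ) (p : ℕ) : Prop :=
  ∃ L M : List ℕ, IsBRD f p L ∧ IsURD f p M ∧ ∀ i, typeSeq L i = 2 * typeSeq M i

/-- The ba-frequency `m(f) = 2k/p` of an ab-ba sequence with period length `p`,
where `k` is the number of `21` blocks per period. -/
noncomputable def baFreq (f : ℕ → ℕ) (p : ℕ) : ℚ :=
  (2 * (((Finset.range (p / 2)).filter (fun j => f (2 * j) = 2)).card : ℚ)) / (p : ℚ)

/-! ### Rotor-router networks

A rotor-router network on a vertex type `V`: a source, a finite set of targets
(outdegree 0), and at every non-target vertex `v` the rotor pattern, recorded by the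
sequence `rotor v : ℕ → V` of heads of its successive out-edges.  The underlying digraph
has an edge `v → w` (for non-target `v`) iff `w` occurs in `v`'s rotor pattern. -/

structure RotorNetwork (V : Type) where
  source : V
  target : Finset V
  rotor : V → ℕ → V

namespace RotorNetwork

variable {V : Type} [DecidableEq V]

/-- One step of the particle dynamics on states `(current position, firing counts)`:
at a target, record it and restart at the source; at a non-target vertex `v`, fire the
next term of `v`'s rotor pattern. -/
noncomputable def step (N : RotorNetwork V) (s : V × (V → ℕ)) : V × (V → ℕ) :=
  if s.1 ∈ N.target then (N.source, s.2)
  else (N.rotor s.1 (s.2 s.1), Function.update s.2 s.1 (s.2 s.1 + 1))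

/-- The full trajectory of the particle, started at the source with all rotors fresh. -/
noncomputable def traj (N : RotorNetwork V) : ℕ → V × (V → ℕ)
  | 0 => (N.source, fun _ => 0)
  | t + 1 => N.step (N.traj t)

/-- The hitting sequence: the subsequence of targets visited, in order. -/
noncomputable def hitSeq (N : RotorNetwork V) : ℕ → V :=
  fun k => (N.traj (Nat.nth (fun t => (N.traj t).1 ∈ N.target) k)).1

/-- Adjacency of the underlying digraph. -/
def adj (N : RotorNetwork V) (v w : V) : Prop :=
  v ∉ N.target ∧ ∃ k, N.rotor v k = w

/-- A valid rotor-router network: the source is not a target, there is at least one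
target, and every non-target vertex can reach some target. -/
def Valid (N : RotorNetwork V) : Prop :=
  N.source ∉ N.target ∧ N.target.Nonempty ∧
  ∀ v : V, v ∉ N.target → ∃ t ∈ N.target, Relation.ReflTransGen N.adj v t

/-- The rotor pattern at `v` has type `r`: it is `e ∘ r` for some assignment `e` of
states to out-neighbours. -/
def HasType (N : RotorNetwork V) (v : V) (r : ℕ → ℕ) : Prop :=
  ∃ e : ℕ → V, ∀ k, N.rotor v k = e (r k)

end RotorNetwork

/-- The alternating rotor type `1, 2, 1, 2, …` of period `2`. -/
def rot12 : ℕ → ℕ := fun k => if k % 2 = 0 then 1 else 2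

/-- `r` is universal: every rotor type `r'` is, up to a bijective relabelling of states,
the hitting sequence of some finite rotor-router network all of whose rotors have type `r`. -/
noncomputable def Universal (r : ℕ → ℕ) : Prop :=
  ∀ (r' : ℕ → ℕ) (n' : ℕ), IsMinimalPeriod r' n' →
    ∃ (m : ℕ) (N : RotorNetwork (Fin m)), N.Valid ∧
      (∀ v, v ∉ N.target → N.HasType v r) ∧ SeqEquiv N.hitSeq r'

/-- The (1-based) position of the `m`-th occurrence of the state `v` in `f`
(`posOf f 1 = f`, `posOf f 2 = g` in the paper's notation; `countIn f · 1 = F`,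
`countIn f · 2 = G`). -/
noncomputable def posOf (f : ℕ → ℕ) (v m : ℕ) : ℕ := Nat.nth (fun k => f k = v) (m - 1) + 1

lemma aux3_countIn_eq_count (f : ℕ → ℕ) (t v : ℕ) :
    countIn f t v = Nat.count (fun k => f k = v) t := by
  simp [countIn, Nat.count_eq_card_filter_range]

lemma aux3_count_add {P : ℕ → Prop} [DecidablePred P] {N : ℕ}
    (hper : ∀ t, P (t + N) ↔ P t) :
    ∀ t, Nat.count P (t + N) = Nat.count P t + Nat.count P N := by
  intro t
  induction t with
  | zero => simp
  | succ t ih =>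
      have h : t + 1 + N = (t + N) + 1 := by ring
      rw [h, Nat.count_succ, ih, Nat.count_succ]
      by_cases hp : P t
      · rw [if_pos ((hper t).mpr hp), if_pos hp]; ring
      · rw [if_neg (fun hh => hp ((hper t).mp hh)), if_neg hp]; ring

lemma aux3_count_add_mul {P : ℕ → Prop} [DecidablePred P] {N : ℕ}
    (hper : ∀ t, P (t + N) ↔ P t) (t m : ℕ) :
    Nat.count P (t + m * N) = Nat.count P t + m * Nat.count P N := by
  induction m with
  | zero => simp
  | succ m ih =>
      have h : t + (m + 1) * N = (t + m * N) + N := by ring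
      rw [h, aux3_count_add hper, ih]; ring

lemma aux3_periodic_mul {α : Type*} {f : ℕ → α} {q : ℕ} (h : IsPeriodicWith f q)
    (m k : ℕ) : f (k + m * q) = f k := by
  induction m with
  | zero => simp
  | succ m ih =>
      have he : k + (m + 1) * q = (k + m * q) + q := by ring
      rw [he, h, ih]

lemma aux3_infinite {P : ℕ → Prop} {N : ℕ} (hN : 0 < N)
    (hstep : ∀ t, P t → P (t + N)) {t0 : ℕ} (h0 : P t0) : (setOf P).Infinite := by
  apply Set.infinite_of_injective_forall_mem (f := fun k : ℕ => t0 + k * N)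
  · intro a b hab
    simp only at hab
    exact Nat.eq_of_mul_eq_mul_right hN (by omega)
  · intro k
    induction k with
    | zero => show P (t0 + 0 * N); simpa using h0
    | succ k ih =>
        have he : t0 + (k + 1) * N = (t0 + k * N) + N := by ring
        change P (t0 + k * N) at ih; show P (t0 + (k + 1) * N)
        rw [he]; exact hstep _ ih

lemma aux3_minPeriod_dvd {α : Type*} {f : ℕ → α} {q : ℕ} (hq : 0 < q)
    (hper : IsPeriodicWith f q) : minPeriod f ∣ q := by
  have hmem : minPeriod f ∈ {n | 0 < n ∧ IsPeriodicWith f n} :=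
    Nat.sInf_mem ⟨q, hq, hper⟩
  set p := minPeriod f with hp
  have hmod : IsPeriodicWith f (q % p) := by
    intro k
    have h1 : k + q % p + (q / p) * p = k + q := by
      have := Nat.mod_add_div' q p; omega
    calc f (k + q % p) = f (k + q % p + (q / p) * p) :=
          (aux3_periodic_mul hmem.2 _ _).symm
      _ = f (k + q) := by rw [h1]
      _ = f k := hper k
  by_contra hnd
  have hpos : 0 < q % p := Nat.pos_of_ne_zero fun h => hnd (Nat.dvd_of_mod_eq_zero h)
  have hle : p ≤ q % p := Nat.sInf_le ⟨hpos, hmod⟩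
  have : q % p < p := Nat.mod_lt _ hmem.1
  omega

lemma aux3_shift (p Q : ℕ → Prop) [DecidablePred p] [DecidablePred Q]
    (hinf : (setOf p).Infinite) (N : ℕ) :
    ((Finset.range N).filter (fun t => p t ∧ Q (Nat.count p t))).card
      = ((Finset.range (Nat.count p N)).filter Q).card := by
  apply Finset.card_bij (fun t _ => Nat.count p t)
  · intro t ht
    simp only [Finset.mem_filter, Finset.mem_range] at ht ⊢
    obtain ⟨htN, hpt, hQ⟩ := ht
    refine ⟨?_, hQ⟩
    have h1 : Nat.count p (t + 1) ≤ Nat.count p N := Nat.count_monotone _ (by omega)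
    rw [Nat.count_succ, if_pos hpt] at h1; omega
  · intro a ha b hb hab
    simp only [Finset.mem_filter, Finset.mem_range] at ha hb
    have h1 := Nat.nth_count (p := p) ha.2.1
    have h2 := Nat.nth_count (p := p) hb.2.1
    rw [← h1, ← h2, hab]
  · intro j hj
    simp only [Finset.mem_filter, Finset.mem_range] at hj
    have hmem := Nat.nth_mem_of_infinite hinf j
    have hc := Nat.count_nth_of_infinite hinf j
    refine ⟨Nat.nth p j, ?_, hc⟩
    simp only [Finset.mem_filter, Finset.mem_range]
    refine ⟨?_, hmem, by rw [hc]; exact hj.2⟩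
    by_contra hle
    have : Nat.count p N ≤ Nat.count p (Nat.nth p j) := Nat.count_monotone _ (by omega)
    omega

lemma aux3_card_filter {p : ℕ → Prop} [DecidablePred p] (m : ℕ) :
    ((Finset.range m).filter p).card = Nat.count p m := by
  simp [Nat.count_eq_card_filter_range]

noncomputable def aux3P (r : ℕ → ℕ) : ℕ → Prop :=
  fun t => (hitAt true false r t).isSome = true

/-- For every two-state rotor type `r`, the hitting sequence `UD(r)` is
balanced: it is periodic, and in each (aligned) period the targets `4` and `5` occur
equally often. -/
theorem statement3 (r : ℕ → ℕ) (n : ℕ) (h2 : TwoState r) (hmin : IsMinimalPeriod r n) :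
    0 < minPeriod (UDseq r) ∧ IsPeriodicWith (UDseq r) (minPeriod (UDseq r)) ∧
    ∀ k : ℕ,
      countIn (fun j => UDseq r (k * minPeriod (UDseq r) + j)) (minPeriod (UDseq r)) 4 =
      countIn (fun j => UDseq r (k * minPeriod (UDseq r) + j)) (minPeriod (UDseq r)) 5 := by
  classical
  obtain ⟨hall, ⟨k1, hk1⟩, ⟨k2, hk2⟩⟩ := h2
  obtain ⟨hn, hr, -⟩ := hmin
  have hnot1 : ∀ k, (¬ r k = 1) ↔ r k = 2 := by
    intro k; rcases hall k with h | h <;> simp [h]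
  have hnot2 : ∀ k, (¬ r k = 2) ↔ r k = 1 := by
    intro k; rcases hall k with h | h <;> simp [h]
  have hr1per : ∀ t, (fun k => r k = 1) (t + n) ↔ (fun k => r k = 1) t := by
    intro t; show r (t + n) = 1 ↔ r t = 1; rw [hr t]
  have hr2per : ∀ t, (fun k => r k = 2) (t + n) ↔ (fun k => r k = 2) t := by
    intro t; show r (t + n) = 2 ↔ r t = 2; rw [hr t]
  set c1 := Nat.count (fun k => r k = 1) n with hc1def
  set c2 := Nat.count (fun k => r k = 2) n with hc2def
  have hcpos : ∀ (v k0 : ℕ), r k0 = v → 0 < Nat.count (fun k => r k = v) n := by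
    intro v k0 hk0
    have hmodv : r (k0 % n) = v := by
      have h1 : r (k0 % n + k0 / n * n) = r (k0 % n) := aux3_periodic_mul hr _ _
      rw [Nat.mod_add_div'] at h1
      rw [← h1]; exact hk0
    have hs : Nat.count (fun k => r k = v) (k0 % n + 1)
        = Nat.count (fun k => r k = v) (k0 % n) + 1 := by
      rw [Nat.count_succ, if_pos hmodv]
    have h3 : Nat.count (fun k => r k = v) (k0 % n + 1) ≤ Nat.count (fun k => r k = v) n :=
      Nat.count_monotone _ (Nat.succ_le_of_lt (Nat.mod_lt _ hn))
    omega
  have hc1pos : 0 < c1 := hcpos 1 k1 hk1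
  have hc2pos : 0 < c2 := hcpos 2 k2 hk2
  have hNpos : 0 < n * n := Nat.mul_pos hn hn
  have hrN : ∀ t, r (t + n * n) = r t := fun t => aux3_periodic_mul hr n t
  have hp1inf : (setOf fun k => r k = 1).Infinite :=
    aux3_infinite hn (fun t h => by show r (t + n) = 1; rw [hr t]; exact h) hk1
  have hp2inf : (setOf fun k => r k = 2).Infinite :=
    aux3_infinite hn (fun t h => by show r (t + n) = 2; rw [hr t]; exact h) hk2
  -- periodicity of hitAt with period n*n
  have hFr : ∀ t, r (countIn r (t + n * n) 1) = r (countIn r t 1) := by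
    intro t
    rw [aux3_countIn_eq_count, aux3_countIn_eq_count,
      aux3_count_add_mul (P := fun k => r k = 1) (N := n) hr1per t n,
      ← hc1def, mul_comm n c1]
    exact aux3_periodic_mul hr _ _
  have hGr : ∀ t, r (countIn r (t + n * n) 2) = r (countIn r t 2) := by
    intro t
    rw [aux3_countIn_eq_count, aux3_countIn_eq_count,
      aux3_count_add_mul (P := fun k => r k = 2) (N := n) hr2per t n,
      ← hc2def, mul_comm n c2]
    exact aux3_periodic_mul hr _ _
  have heq : ∀ t, hitAt true false r (t + n * n) = hitAt true false r t := by
    intro t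
    simp only [hitAt, hrN t, hFr t, hGr t]
  have hPper : ∀ t, aux3P r (t + n * n) ↔ aux3P r t := by
    intro t; unfold aux3P; rw [heq t]
  -- characterizations of hits
  have hval : ∀ t, hitAt true false r t = none ∨ hitAt true false r t = some 4 ∨
      hitAt true false r t = some 5 := by
    intro t; unfold hitAt; split_ifs <;> simp
  have h4 : ∀ t, hitAt true false r t = some 4 ↔ (r t = 1 ∧ ¬ r (countIn r t 1) = 1) := by
    intro t; unfold hitAt; split_ifs <;> simp_all [hnot1, hnot2]
  have h5 : ∀ t, hitAt true false r t = some 5 ↔ (r t = 2 ∧ r (countIn r t 2) = 1) := by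
    intro t; unfold hitAt; split_ifs <;> simp_all [hnot1, hnot2]
  have hPiff : ∀ t, aux3P r t ↔ (hitAt true false r t = some 4 ∨
      hitAt true false r t = some 5) := by
    intro t; unfold aux3P
    rcases hval t with h | h | h <;> simp [h]
  -- counting the 4-hits and 5-hits per period n*n
  have hcN1 : Nat.count (fun k => r k = 1) (n * n) = n * c1 := by
    have := aux3_count_add_mul (P := fun k => r k = 1) (N := n) hr1per 0 n
    simpa [hc1def] using this
  have hcN2 : Nat.count (fun k => r k = 2) (n * n) = n * c2 := by
    have := aux3_count_add_mul (P := fun k => r k = 2) (N := n) hr2per 0 n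
    simpa [hc2def] using this
  have hA4 : ((Finset.range (n * n)).filter (fun t => hitAt true false r t = some 4)).card
      = c1 * c2 := by
    have e1 : ∀ t ∈ Finset.range (n * n), hitAt true false r t = some 4 ↔
        ((fun k => r k = 1) t ∧ (fun j => r j = 2) (Nat.count (fun k => r k = 1) t)) := by
      intro t _
      rw [h4 t, aux3_countIn_eq_count, hnot1]
    calc ((Finset.range (n * n)).filter (fun t => hitAt true false r t = some 4)).card
        = ((Finset.range (n * n)).filter (fun t => (fun k => r k = 1) t ∧
            (fun j => r j = 2) (Nat.count (fun k => r k = 1) t))).card :=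
          congrArg Finset.card (Finset.filter_congr e1)
      _ = ((Finset.range (Nat.count (fun k => r k = 1) (n * n))).filter
            (fun j => r j = 2)).card := aux3_shift (fun k => r k = 1) (fun j => r j = 2) hp1inf (n * n)
      _ = c1 * c2 := by
          rw [aux3_card_filter, hcN1, mul_comm n c1]
          have := aux3_count_add_mul (P := fun k => r k = 2) (N := n) hr2per 0 c1
          simpa [hc2def] using this
  have hA5 : ((Finset.range (n * n)).filter (fun t => hitAt true false r t = some 5)).card
      = c2 * c1 := by
    have e1 : ∀ t ∈ Finset.range (n * n), hitAt true false r t = some 5 ↔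
        ((fun k => r k = 2) t ∧ (fun j => r j = 1) (Nat.count (fun k => r k = 2) t)) := by
      intro t _
      rw [h5 t, aux3_countIn_eq_count]
    calc ((Finset.range (n * n)).filter (fun t => hitAt true false r t = some 5)).card
        = ((Finset.range (n * n)).filter (fun t => (fun k => r k = 2) t ∧
            (fun j => r j = 1) (Nat.count (fun k => r k = 2) t))).card :=
          congrArg Finset.card (Finset.filter_congr e1)
      _ = ((Finset.range (Nat.count (fun k => r k = 2) (n * n))).filter
            (fun j => r j = 1)).card := aux3_shift (fun k => r k = 2) (fun j => r j = 1) hp2inf (n * n)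
      _ = c2 * c1 := by
          rw [aux3_card_filter, hcN2, mul_comm n c2]
          have := aux3_count_add_mul (P := fun k => r k = 1) (N := n) hr1per 0 c2
          simpa [hc1def] using this
  -- number of hits per period n*n
  set H := Nat.count (aux3P r) (n * n) with hHdef
  have hHsum : H = c1 * c2 + c2 * c1 := by
    rw [hHdef, Nat.count_eq_card_filter_range]
    have hsplit : (Finset.range (n * n)).filter (aux3P r)
        = ((Finset.range (n * n)).filter (fun t => hitAt true false r t = some 4))
          ∪ ((Finset.range (n * n)).filter (fun t => hitAt true false r t = some 5)) := by
      rw [← Finset.filter_or]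
      exact Finset.filter_congr fun t _ => hPiff t
    rw [hsplit, Finset.card_union_of_disjoint, hA4, hA5]
    simp only [Finset.disjoint_left, Finset.mem_filter]
    rintro a ⟨-, h4a⟩ ⟨-, h5a⟩
    rw [h4a] at h5a
    exact absurd (Option.some.inj h5a) (by norm_num)
  have hHpos : 0 < H := by
    rw [hHsum]; positivity
  have hPinf : (setOf (aux3P r)).Infinite := by
    have h0 : ∃ t0, aux3P r t0 := by
      have hpos := hHpos
      rw [hHdef, Nat.count_eq_card_filter_range, Finset.card_pos] at hpos
      obtain ⟨t0, ht0⟩ := hpos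
      exact ⟨t0, (Finset.mem_filter.mp ht0).2⟩
    obtain ⟨t0, ht0⟩ := h0
    exact aux3_infinite hNpos (fun t h => (hPper t).mpr h) ht0
  have hnth : ∀ m, Nat.nth (aux3P r) (m + H) = Nat.nth (aux3P r) m + n * n := by
    intro m
    have hs := Nat.nth_mem_of_infinite hPinf m
    have hc := Nat.count_nth_of_infinite hPinf m
    have hPs : aux3P r (Nat.nth (aux3P r) m + n * n) := (hPper _).mpr hs
    have hcc : Nat.count (aux3P r) (Nat.nth (aux3P r) m + n * n) = m + H := by
      rw [aux3_count_add (P := aux3P r) (N := n * n) hPper, hc, hHdef]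
    calc Nat.nth (aux3P r) (m + H)
        = Nat.nth (aux3P r) (Nat.count (aux3P r) (Nat.nth (aux3P r) m + n * n)) := by
          rw [hcc]
      _ = Nat.nth (aux3P r) m + n * n := Nat.nth_count hPs
  have hUDeq : ∀ k, UDseq r k = (hitAt true false r (Nat.nth (aux3P r) k)).getD 4 :=
    fun k => rfl
  have hUDper : IsPeriodicWith (UDseq r) H := by
    intro k
    rw [hUDeq, hUDeq, hnth k, heq]
  have hmem : 0 < minPeriod (UDseq r) ∧ IsPeriodicWith (UDseq r) (minPeriod (UDseq r)) :=
    Nat.sInf_mem (⟨H, hHpos, hUDper⟩ :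
      Set.Nonempty {m | 0 < m ∧ IsPeriodicWith (UDseq r) m})
  obtain ⟨hppos, hpper⟩ := hmem
  set p := minPeriod (UDseq r) with hpdef
  obtain ⟨d, hd⟩ : p ∣ H := aux3_minPeriod_dvd hHpos hUDper
  have hdpos : 0 < d := by
    rcases Nat.eq_zero_or_pos d with h | h
    · rw [h, Nat.mul_zero] at hd; omega
    · exact h
  have hudcount : ∀ v, ((Finset.range (n * n)).filter
        (fun t => hitAt true false r t = some v)).card
      = Nat.count (fun j => UDseq r j = v) H := by
    intro v
    have e : ∀ t ∈ Finset.range (n * n), hitAt true false r t = some v ↔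
        (aux3P r t ∧ (fun j => UDseq r j = v) (Nat.count (aux3P r) t)) := by
      intro t _
      constructor
      · intro hsome
        have hPt : aux3P r t := by unfold aux3P; rw [hsome]; rfl
        refine ⟨hPt, ?_⟩
        show UDseq r (Nat.count (aux3P r) t) = v
        rw [hUDeq, Nat.nth_count hPt, hsome]
        rfl
      · rintro ⟨hPt, hv⟩
        have hv' : UDseq r (Nat.count (aux3P r) t) = v := hv
        rw [hUDeq, Nat.nth_count hPt] at hv'
        obtain ⟨w, hw⟩ := Option.isSome_iff_exists.mp hPt
        rw [hw] at hv' ⊢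
        simpa using hv'
    calc ((Finset.range (n * n)).filter (fun t => hitAt true false r t = some v)).card
        = ((Finset.range (n * n)).filter (fun t => aux3P r t ∧
            (fun j => UDseq r j = v) (Nat.count (aux3P r) t))).card :=
          congrArg Finset.card (Finset.filter_congr e)
      _ = ((Finset.range (Nat.count (aux3P r) (n * n))).filter
            (fun j => UDseq r j = v)).card := aux3_shift (aux3P r) (fun j => UDseq r j = v) hPinf (n * n)
      _ = Nat.count (fun j => UDseq r j = v) H := by rw [aux3_card_filter, hHdef]
  have hud45 : Nat.count (fun j => UDseq r j = 4) H
      = Nat.count (fun j => UDseq r j = 5) H := by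
    rw [← hudcount 4, ← hudcount 5, hA4, hA5]
    exact Nat.mul_comm c1 c2
  have hper45 : ∀ v t, ((fun j => UDseq r j = v) (t + p)) ↔ ((fun j => UDseq r j = v) t) := by
    intro v t
    show UDseq r (t + p) = v ↔ UDseq r t = v
    rw [hpper t]
  have hmulv : ∀ v, Nat.count (fun j => UDseq r j = v) H
      = d * Nat.count (fun j => UDseq r j = v) p := by
    intro v
    rw [hd, mul_comm p d]
    have := aux3_count_add_mul (P := fun j => UDseq r j = v) (N := p) (hper45 v) 0 d
    simpa using this
  have hkey : Nat.count (fun j => UDseq r j = 4) p = Nat.count (fun j => UDseq r j = 5) p := by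
    have h := hud45
    rw [hmulv 4, hmulv 5] at h
    exact Nat.eq_of_mul_eq_mul_left hdpos h
  refine ⟨hppos, hpper, ?_⟩
  intro k
  have hfe : (fun j => UDseq r (k * p + j)) = UDseq r := by
    funext j
    have he : k * p + j = j + k * p := by ring
    rw [he]
    exact aux3_periodic_mul hpper k j
  rw [hfe, aux3_countIn_eq_count, aux3_countIn_eq_count]
  exact hkey
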